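/- Let P be a partially ordered set and x1 ≤ x2 in P. Then the map G_{x1≤x2} : G_{x1} → G_{x2} is well defined (every y ∈ Star x1 with y ∈ Star x2 gives an element of G_{x2}), is monotone with respect to the orders of G_{x1} and G_{x2}, and sends the element ∞ of G_{x1} to the element ∞ of G_{x2}. -/

import Mathlib

/-- `starP p = {x ∈ P | ∃ y, p ≤ y ∧ x ≤ y}`. -/
def starP {P : Type*} [PartialOrder P] (p : P) : Set P := {x | ∃ y, p ≤ y ∧ x ≤ y}

/-- `linkP p = {x ∈ starP p | ¬ p ≤ x}`. -/
def linkP {P : Type*} [PartialOrder P] (p : P) : Set P := {x | x ∈ starP p ∧ ¬ p ≤ x}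

/-- The tangent fiber `G_x`: the set `Star x` together with an extra element `∞`
(modelled as `none`). -/
def GFiber {P : Type*} [PartialOrder P] (x : P) : Type _ := Option {y : P // y ∈ starP x}

/-- The relation on the tangent fiber `G_x`. -/
def GRel {P : Type*} [PartialOrder P] (x : P) : GFiber x → GFiber x → Prop
  | some y1, some y2 => (y1 : P) ≤ (y2 : P)
  | some y1, none => (y1 : P) ∈ linkP x
  | none, some _ => False
  | none, none => True

open Classical in
/-- The transition map `G_{x1 ≤ x2} : G_{x1} → G_{x2}`. -/
noncomputable def GMap {P : Type*} [PartialOrder P] {x1 x2 : P} (_ : x1 ≤ x2) : GFiber x1 → GFiber x2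
  | some y => if h' : (y : P) ∈ starP x2 then some ⟨(y : P), h'⟩ else none
  | none => none

theorem stmt2 {P : Type*} [PartialOrder P] {x1 x2 : P} (h : x1 ≤ x2) :
    (∀ (y : P) (hy1 : y ∈ starP x1) (hy2 : y ∈ starP x2),
      GMap h (some ⟨y, hy1⟩) = some ⟨y, hy2⟩) ∧
    (∀ a b : GFiber x1, GRel x1 a b → GRel x2 (GMap h a) (GMap h b)) ∧
    GMap h (none : GFiber x1) = (none : GFiber x2) := by
  refine ⟨fun y hy1 hy2 => by simp [GMap, hy2]; rfl, ?_, rfl⟩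
  rintro (_ | ⟨y1, hy1⟩) (_ | ⟨y2, hy2⟩) hab
  · trivial
  · exact absurd hab not_false
  · simp only [GMap]
    by_cases h1 : y1 ∈ starP x2
    · simp only [h1, ↓reduceDIte]; exact ⟨h1, fun hx2 => hab.2 (le_trans h hx2)⟩
    · simp only [h1, ↓reduceDIte]; trivial
  · simp only [GMap]
    by_cases h1 : y1 ∈ starP x2 <;> by_cases h2 : y2 ∈ starP x2
    · simp only [h1, h2, ↓reduceDIte]; exact hab
    · simp only [h1, h2, ↓reduceDIte]; exact ⟨h1, fun hx2 => h2 ⟨y2, le_trans hx2 hab, le_refl _⟩⟩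
    · obtain ⟨z, hz1, hz2⟩ := h2
      exact absurd ⟨z, hz1, le_trans hab hz2⟩ h1
    · simp only [h1, h2, ↓reduceDIte]; trivial
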